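/- Let |ψ⟩ be a unit vector in H_C ⊗ H_P, let E be an orthogonal projection on H_P and Ẽ an orthogonal projection on H_C. Suppose |⟨ψ|(I⊗E)|ψ⟩ − 1/2| ≤ ε, |⟨ψ|(Ẽ⊗I)|ψ⟩ − 1/2| ≤ ε, and ⟨ψ|(Ẽ⊗E)|ψ⟩ ≥ 1/2 − ε. Then ‖(I⊗E)|ψ⟩ − (Ẽ⊗I)|ψ⟩‖ ≤ 2√ε. -/

import Mathlib

open Matrix Kronecker
open scoped ComplexOrder

/-- The Schatten 1-norm (trace norm) of a complex matrix: `tr √(AᴴA)`. -/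
noncomputable def traceNorm {n : Type*} [Fintype n] [DecidableEq n]
    (A : Matrix n n ℂ) : ℝ :=
  (((Matrix.posSemidef_conjTranspose_mul_self A).1.eigenvectorUnitary : Matrix n n ℂ) *
    diagonal (((↑) : ℝ → ℂ) ∘ Real.sqrt ∘ (Matrix.posSemidef_conjTranspose_mul_self A).1.eigenvalues) *
    (star (Matrix.posSemidef_conjTranspose_mul_self A).1.eigenvectorUnitary : Matrix n n ℂ)).trace.re

/-- Package a plain function as a vector of the corresponding Euclidean space. -/
noncomputable def toEuc {ι : Type*} (f : ι → ℂ) : EuclideanSpace ℂ ι :=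
  (WithLp.equiv 2 (ι → ℂ)).symm f

/-- Partial trace over the second tensor factor. -/
noncomputable def ptrR {m p : Type*} [Fintype p] (M : Matrix (m × p) (m × p) ℂ) :
    Matrix m m ℂ :=
  Matrix.of fun i j => ∑ y, M (i, y) (j, y)

/-- Pauli-Z matrix. -/
noncomputable def tauz : Matrix (Fin 2) (Fin 2) ℂ := !![1, 0; 0, -1]

/-- Pauli-X matrix. -/
noncomputable def taux : Matrix (Fin 2) (Fin 2) ℂ := !![0, 1; 1, 0]

lemma herm_inner_aux {ι : Type*} [Fintype ι] [DecidableEq ι] (A : Matrix ι ι ℂ) (hA : Aᴴ = A)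
    (x y : EuclideanSpace ℂ ι) :
    (inner ℂ (Matrix.toEuclideanLin A x) y : ℂ) = inner ℂ x (Matrix.toEuclideanLin A y) := by
  conv_lhs => rw [← hA, Matrix.toEuclideanLin_conjTranspose_eq_adjoint,
    LinearMap.adjoint_inner_left]

lemma mul_apply_aux {ι : Type*} [Fintype ι] [DecidableEq ι] (A B : Matrix ι ι ℂ)
    (x : EuclideanSpace ℂ ι) :
    Matrix.toEuclideanLin A (Matrix.toEuclideanLin B x) = Matrix.toEuclideanLin (A * B) x := by
  simp [Matrix.toEuclideanLin_apply, Matrix.mulVec_mulVec]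

lemma kron_conjTranspose {k l : Type*} (A : Matrix k k ℂ) (B : Matrix l l ℂ) :
    (A ⊗ₖ B)ᴴ = Aᴴ ⊗ₖ Bᴴ := by
  ext ⟨i, j⟩ ⟨i', j'⟩
  simp [Matrix.conjTranspose_apply, Matrix.kroneckerMap_apply]


/-- if `|⟨ψ|(I⊗E)|ψ⟩ − 1/2| ≤ ε`, `|⟨ψ|(Ẽ⊗I)|ψ⟩ − 1/2| ≤ ε` and
`⟨ψ|(Ẽ⊗E)|ψ⟩ ≥ 1/2 − ε` for projections `E` on `H_P` and `Ẽ` on `H_C`, then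
`‖(I⊗E)|ψ⟩ − (Ẽ⊗I)|ψ⟩‖ ≤ 2√ε`. -/
theorem stmt2 {m n : ℕ} (ψ : EuclideanSpace ℂ (Fin m × Fin n)) (hψ : ‖ψ‖ = 1)
    (E : Matrix (Fin n) (Fin n) ℂ) (Et : Matrix (Fin m) (Fin m) ℂ)
    (hE1 : Eᴴ = E) (hE2 : E * E = E) (hEt1 : Etᴴ = Et) (hEt2 : Et * Et = Et)
    (ε : ℝ) (hε : 0 ≤ ε)
    (h1 : ‖((inner ℂ ψ (Matrix.toEuclideanLin
        ((1 : Matrix (Fin m) (Fin m) ℂ) ⊗ₖ E) ψ) : ℂ) - 1/2)‖ ≤ ε)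
    (h2 : ‖((inner ℂ ψ (Matrix.toEuclideanLin
        (Et ⊗ₖ (1 : Matrix (Fin n) (Fin n) ℂ)) ψ) : ℂ) - 1/2)‖ ≤ ε)
    (h3 : ((inner ℂ ψ (Matrix.toEuclideanLin (Et ⊗ₖ E) ψ) : ℂ)).re ≥ 1/2 - ε) :
    ‖Matrix.toEuclideanLin ((1 : Matrix (Fin m) (Fin m) ℂ) ⊗ₖ E) ψ -
      Matrix.toEuclideanLin (Et ⊗ₖ (1 : Matrix (Fin n) (Fin n) ℂ)) ψ‖ ≤
      2 * Real.sqrt ε := by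
  set A := (1 : Matrix (Fin m) (Fin m) ℂ) ⊗ₖ E with hAdef
  set B := Et ⊗ₖ (1 : Matrix (Fin n) (Fin n) ℂ) with hBdef
  have hAh : Aᴴ = A := by rw [hAdef, kron_conjTranspose, Matrix.conjTranspose_one, hE1]
  have hBh : Bᴴ = B := by rw [hBdef, kron_conjTranspose, Matrix.conjTranspose_one, hEt1]
  have hAA : A * A = A := by
    rw [hAdef, ← Matrix.mul_kronecker_mul, one_mul, hE2]
  have hBB : B * B = B := by
    rw [hBdef, ← Matrix.mul_kronecker_mul, one_mul, hEt2]
  have hAB : A * B = Et ⊗ₖ E := by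
    rw [hAdef, hBdef, ← Matrix.mul_kronecker_mul, one_mul, mul_one]
  set x := Matrix.toEuclideanLin A ψ with hxdef
  set y := Matrix.toEuclideanLin B ψ with hydef
  have hx2 : (‖x‖ : ℝ) ^ 2 = ((inner ℂ ψ (Matrix.toEuclideanLin A ψ) : ℂ)).re := by
    have hinner : (inner ℂ x x : ℂ) = inner ℂ ψ (Matrix.toEuclideanLin A ψ) :=
      calc (inner ℂ x x : ℂ) = inner ℂ ψ (Matrix.toEuclideanLin A x) := herm_inner_aux A hAh ψ x
        _ = inner ℂ ψ (Matrix.toEuclideanLin (A * A) ψ) := by rw [hxdef, mul_apply_aux]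
        _ = inner ℂ ψ (Matrix.toEuclideanLin A ψ) := by rw [hAA]
    rw [← @inner_self_eq_norm_sq ℂ, hinner]; rfl
  have hy2 : (‖y‖ : ℝ) ^ 2 = ((inner ℂ ψ (Matrix.toEuclideanLin B ψ) : ℂ)).re := by
    have hinner : (inner ℂ y y : ℂ) = inner ℂ ψ (Matrix.toEuclideanLin B ψ) :=
      calc (inner ℂ y y : ℂ) = inner ℂ ψ (Matrix.toEuclideanLin B y) := herm_inner_aux B hBh ψ y
        _ = inner ℂ ψ (Matrix.toEuclideanLin (B * B) ψ) := by rw [hydef, mul_apply_aux]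
        _ = inner ℂ ψ (Matrix.toEuclideanLin B ψ) := by rw [hBB]
    rw [← @inner_self_eq_norm_sq ℂ, hinner]; rfl
  have hxy : (inner ℂ x y : ℂ) = inner ℂ ψ (Matrix.toEuclideanLin (Et ⊗ₖ E) ψ) := by
    calc (inner ℂ x y : ℂ) = inner ℂ ψ (Matrix.toEuclideanLin A y) := herm_inner_aux A hAh ψ y
      _ = inner ℂ ψ (Matrix.toEuclideanLin (A * B) ψ) := by rw [hydef, mul_apply_aux]
      _ = inner ℂ ψ (Matrix.toEuclideanLin (Et ⊗ₖ E) ψ) := by rw [hAB]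
  have hre1 : ((inner ℂ ψ (Matrix.toEuclideanLin A ψ) : ℂ)).re ≤ 1/2 + ε := by
    have h0 := (Complex.abs_re_le_norm ((inner ℂ ψ (Matrix.toEuclideanLin A ψ) : ℂ) - 1/2)).trans h1
    have hr : ((inner ℂ ψ (Matrix.toEuclideanLin A ψ) : ℂ) - 1/2).re
        = ((inner ℂ ψ (Matrix.toEuclideanLin A ψ) : ℂ)).re - 1/2 := by
      norm_num [Complex.sub_re]
    rw [hr] at h0
    linarith [(abs_le.mp h0).2]
  have hre2 : ((inner ℂ ψ (Matrix.toEuclideanLin B ψ) : ℂ)).re ≤ 1/2 + ε := by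
    have h0 := (Complex.abs_re_le_norm ((inner ℂ ψ (Matrix.toEuclideanLin B ψ) : ℂ) - 1/2)).trans h2
    have hr : ((inner ℂ ψ (Matrix.toEuclideanLin B ψ) : ℂ) - 1/2).re
        = ((inner ℂ ψ (Matrix.toEuclideanLin B ψ) : ℂ)).re - 1/2 := by
      norm_num [Complex.sub_re]
    rw [hr] at h0
    linarith [(abs_le.mp h0).2]
  have hsq : ‖x - y‖ ^ 2 ≤ 4 * ε := by
    have hns := @norm_sub_sq ℂ _ _ _ _ x y
    rw [hns, hx2, hy2]
    have hxy' : ((inner ℂ x y : ℂ)).re ≥ 1/2 - ε := by rw [hxy]; exact h3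
    simp only [RCLike.re_to_complex] at *
    linarith
  calc ‖x - y‖ = Real.sqrt (‖x - y‖ ^ 2) := (Real.sqrt_sq (norm_nonneg _)).symm
    _ ≤ Real.sqrt (4 * ε) := Real.sqrt_le_sqrt hsq
    _ = 2 * Real.sqrt ε := by
        rw [Real.sqrt_mul (by norm_num), show (4:ℝ) = 2^2 by norm_num,
          Real.sqrt_sq (by norm_num : (0:ℝ) ≤ 2)]
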